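/- arXiv:2009.04882 — 2 statements merged into one kernel-verified Lean document; each statement's English description precedes it below -/
import Mathlib

section
/- Let Z_1,...,Z_m be fixed values in {0,1} with sum Z_blk, and let a uniformly random subset of size k be drawn without replacement for parameter estimation with sample mean Z̄_pe, leaving n = m - k values with mean Z̄_key. Then for any ξ > 0, the probability that Z̄_blk ≥ Z̄_pe + ξ (i.e., the population mean exceeds the sample mean by ξ) is at most exp(-2 m k ξ² / (n+1)). -/
open Finset Classical


lemma hoeff_two (p : ℝ) (hp0 : 0 ≤ p) (hp1 : p ≤ 1) (t : ℝ) :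
    (1 - p) + p * Real.exp t ≤ Real.exp (p * t + t ^ 2 / 8) := by
  have hD : ∀ x : ℝ, 0 < 1 - p + p * Real.exp x := by
    intro x
    rcases eq_or_lt_of_le hp0 with h | h
    · simp [← h]
    · nlinarith [Real.exp_pos x, mul_pos h (Real.exp_pos x)]
  set g : ℝ → ℝ := fun x => p * x + x ^ 2 / 8 - Real.log (1 - p + p * Real.exp x) with hgdef
  set G : ℝ → ℝ := fun x => p + x / 4 - p * Real.exp x / (1 - p + p * Real.exp x) with hGdef
  have hg : ∀ x : ℝ, HasDerivAt g (G x) x := by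
    intro x
    have hDd : HasDerivAt (fun x : ℝ => 1 - p + p * Real.exp x) (p * Real.exp x) x :=
      ((Real.hasDerivAt_exp x).const_mul p).const_add (1 - p)
    have hlog := hDd.log (ne_of_gt (hD x))
    have h1 : HasDerivAt (fun x : ℝ => p * x) p x := by
      simpa using (hasDerivAt_id x).const_mul p
    have h2 : HasDerivAt (fun x : ℝ => x ^ 2 / 8) (2 * x / 8) x := by
      simpa using (hasDerivAt_pow 2 x).div_const 8
    have := (h1.add h2).sub hlog
    exact this.congr_deriv (by simp only [hGdef]; ring)
  have hG : ∀ x : ℝ, HasDerivAt G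
      (1 / 4 - (p * Real.exp x * (1 - p + p * Real.exp x) - p * Real.exp x * (p * Real.exp x))
        / (1 - p + p * Real.exp x) ^ 2) x := by
    intro x
    have hDd : HasDerivAt (fun x : ℝ => 1 - p + p * Real.exp x) (p * Real.exp x) x :=
      ((Real.hasDerivAt_exp x).const_mul p).const_add (1 - p)
    have hnum : HasDerivAt (fun x : ℝ => p * Real.exp x) (p * Real.exp x) x :=
      (Real.hasDerivAt_exp x).const_mul p
    have hdiv := hnum.div hDd (ne_of_gt (hD x))
    have h2 : HasDerivAt (fun x : ℝ => p + x / 4) (1 / 4) x := by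
      simpa using ((hasDerivAt_id x).div_const 4).const_add p
    exact h2.sub hdiv
  have hG' : ∀ x : ℝ, 0 ≤ 1 / 4 -
      (p * Real.exp x * (1 - p + p * Real.exp x) - p * Real.exp x * (p * Real.exp x))
        / (1 - p + p * Real.exp x) ^ 2 := by
    intro x
    rw [sub_nonneg, div_le_iff₀ (pow_pos (hD x) 2)]
    nlinarith [sq_nonneg (1 - p - p * Real.exp x), Real.exp_pos x]
  have hGmono : Monotone G :=
    monotone_of_deriv_nonneg (fun x => (hG x).differentiableAt)
      (fun x => by rw [(hG x).deriv]; exact hG' x)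
  have hG0 : G 0 = 0 := by
    have : (1 : ℝ) - p + p * Real.exp 0 = 1 := by simp
    simp [hGdef, Real.exp_zero]
  have hgdiff : Differentiable ℝ g := fun x => (hg x).differentiableAt
  have hg0 : g 0 = 0 := by simp [hgdef]
  have key : ∀ x : ℝ, 0 ≤ g x := by
    intro x
    rcases le_total 0 x with hx | hx
    · have hmono : MonotoneOn g (Set.Ici 0) := by
        apply monotoneOn_of_deriv_nonneg (convex_Ici 0) hgdiff.continuous.continuousOn
          (hgdiff.differentiableOn)
        intro y hy
        rw [(hg y).deriv]
        rw [interior_Ici] at hy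
        have := hGmono (le_of_lt hy)
        rw [hG0] at this
        exact this
      have := hmono (Set.self_mem_Ici) (Set.mem_Ici.mpr hx) hx
      rw [hg0] at this; exact this
    · have hmono : AntitoneOn g (Set.Iic 0) := by
        apply antitoneOn_of_deriv_nonpos (convex_Iic 0) hgdiff.continuous.continuousOn
          (hgdiff.differentiableOn)
        intro y hy
        rw [(hg y).deriv]
        rw [interior_Iic] at hy
        have := hGmono (le_of_lt hy)
        rw [hG0] at this
        exact this
      have := hmono (Set.mem_Iic.mpr hx) (Set.self_mem_Iic) hx
      rw [hg0] at this; exact this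
  have := key t
  have hlog : Real.log (1 - p + p * Real.exp t) ≤ p * t + t ^ 2 / 8 := by
    simp only [hgdef] at this; linarith
  calc (1 - p) + p * Real.exp t ≤ Real.exp (Real.log (1 - p + p * Real.exp t)) := by
        rw [Real.exp_log (hD t)]
    _ ≤ Real.exp (p * t + t ^ 2 / 8) := Real.exp_le_exp.mpr hlog

lemma sum_inv_sq (n : ℕ) (hn : 1 ≤ n) : ∀ k : ℕ,
    ∑ j ∈ Finset.range k, (1:ℝ)/(((n + k : ℕ):ℝ) - j - 1)^2
      ≤ (k:ℝ) * ((n:ℝ) + 1) / (((n:ℝ) + (k:ℝ)) * (n:ℝ)^2) := by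
  intro k
  induction k with
  | zero => simp
  | succ k ih =>
    rw [Finset.sum_range_succ']
    have hstep : ∀ j : ℕ, (1:ℝ)/(((n + (k+1) : ℕ):ℝ) - ((j+1 : ℕ):ℝ) - 1)^2
        = (1:ℝ)/(((n + k : ℕ):ℝ) - j - 1)^2 := by
      intro j; push_cast; ring_nf
    simp only [hstep]
    have hf0 : (1:ℝ)/(((n + (k+1) : ℕ):ℝ) - ((0:ℕ):ℝ) - 1)^2 = 1/((n:ℝ)+k)^2 := by
      push_cast; ring_nf
    rw [hf0]
    have hn1 : (1:ℝ) ≤ (n:ℝ) := by exact_mod_cast hn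
    have hk0 : (0:ℝ) ≤ (k:ℝ) := Nat.cast_nonneg k
    have hnp : (0:ℝ) < (n:ℝ) := by linarith
    have hnk : (0:ℝ) < (n:ℝ) + k := by linarith
    have hkey : (k:ℝ) * ((n:ℝ) + 1) / (((n:ℝ) + k) * (n:ℝ)^2) + 1/((n:ℝ)+k)^2
        ≤ ((k:ℝ)+1) * ((n:ℝ) + 1) / ((((n:ℝ) + k)+1) * (n:ℝ)^2) := by
      rw [div_add_div _ _ (by positivity) (by positivity),
        div_le_div_iff₀ (by positivity) (by positivity)]
      nlinarith [sq_nonneg ((n:ℝ)+k), mul_nonneg hk0 (Nat.cast_nonneg n : (0:ℝ) ≤ n),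
        mul_nonneg (mul_nonneg hk0 (Nat.cast_nonneg n : (0:ℝ) ≤ n)) (sq_nonneg ((n:ℝ)+k))]
    calc _ ≤ (k:ℝ) * ((n:ℝ) + 1) / (((n:ℝ) + k) * (n:ℝ)^2) + 1/((n:ℝ)+k)^2 := by
          linarith
      _ ≤ _ := by
          push_cast
          convert hkey using 2 <;> ring

lemma sum_pc_succ {α : Type*} [Fintype α] [DecidableEq α] (j : ℕ) (g : Finset α → ℝ) :
    ((j:ℝ)+1) * ∑ t ∈ Finset.univ.powersetCard (j+1), g t
      = ∑ s ∈ Finset.univ.powersetCard j, ∑ i ∈ sᶜ, g (insert i s) := by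
  have lhs1 : ((j:ℝ)+1) * ∑ t ∈ Finset.univ.powersetCard (j+1), g t
      = ∑ t ∈ Finset.univ.powersetCard (j+1), ∑ _i ∈ t, g t := by
    rw [Finset.mul_sum]
    apply Finset.sum_congr rfl
    intro t ht
    rw [Finset.sum_const, nsmul_eq_mul, (Finset.mem_powersetCard.1 ht).2]
    push_cast; ring
  rw [lhs1, Finset.sum_sigma', Finset.sum_sigma']
  apply Finset.sum_nbij' (i := fun p => ⟨p.1.erase p.2, p.2⟩)
    (j := fun p => ⟨insert p.2 p.1, p.2⟩)
  · rintro ⟨t, i⟩ hp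
    simp only [Finset.mem_sigma, Finset.mem_powersetCard_univ] at hp ⊢
    obtain ⟨ht, hit⟩ := hp
    constructor
    · rw [Finset.card_erase_of_mem hit, ht]; rfl
    · simp
  · rintro ⟨s, i⟩ hp
    simp only [Finset.mem_sigma, Finset.mem_powersetCard_univ, Finset.mem_compl] at hp ⊢
    obtain ⟨hs, his⟩ := hp
    constructor
    · rw [Finset.card_insert_of_notMem his, hs]
    · exact Finset.mem_insert_self _ _
  · rintro ⟨t, i⟩ hp
    simp only [Finset.mem_sigma, Finset.mem_powersetCard_univ] at hp
    simp [Finset.insert_erase hp.2]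
  · rintro ⟨s, i⟩ hp
    simp only [Finset.mem_sigma, Finset.mem_powersetCard_univ, Finset.mem_compl] at hp
    simp [Finset.erase_insert hp.2]
  · rintro ⟨t, i⟩ hp
    simp only [Finset.mem_sigma, Finset.mem_powersetCard_univ] at hp
    simp [Finset.insert_erase hp.2]

lemma mgf_step (m : ℕ) (z : Fin m → ℝ) (hz : ∀ i, z i = 0 ∨ z i = 1)
    (j : ℕ) (hj : j + 1 < m) (lam : ℝ) :
    (∑ t ∈ Finset.univ.powersetCard (j+1),
        Real.exp (lam * (((j:ℝ)+1) * ((∑ i, z i)/m) - ∑ i ∈ t, z i)/((m:ℝ)-j-1)))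
      / (Nat.choose m (j+1) : ℝ)
    ≤ Real.exp (lam^2/(8*((m:ℝ)-j-1)^2)) *
      ((∑ s ∈ Finset.univ.powersetCard j,
          Real.exp (lam * ((j:ℝ) * ((∑ i, z i)/m) - ∑ i ∈ s, z i)/((m:ℝ)-j)))
        / (Nat.choose m j : ℝ)) := by
  set μ : ℝ := (∑ i, z i)/m with hμ
  set E : ℝ := Real.exp (lam^2/(8*((m:ℝ)-j-1)^2)) with hE
  set g : Finset (Fin m) → ℝ :=
    fun t => Real.exp (lam * (((j:ℝ)+1) * μ - ∑ i ∈ t, z i)/((m:ℝ)-j-1)) with hg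
  have hm : 0 < m := by omega
  have hjm : (j:ℝ) + 1 < m := by exact_mod_cast hj
  have hcj : (0:ℝ) < (m:ℝ) - j := by linarith
  have hcj1 : (0:ℝ) < (m:ℝ) - j - 1 := by linarith
  have hsumz : (m:ℝ) * μ = ∑ i, z i := by
    rw [hμ]; field_simp
  have inner : ∀ s ∈ (Finset.univ.powersetCard j : Finset (Finset (Fin m))),
      ∑ i ∈ sᶜ, g (insert i s)
      ≤ ((m:ℝ)-j) * (E * Real.exp (lam * ((j:ℝ) * μ - ∑ i' ∈ s, z i')/((m:ℝ)-j))) := by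
    intro s hs
    have hscard : s.card = j := (Finset.mem_powersetCard.1 hs).2
    have hjlem : j ≤ m := by omega
    have hccard : (sᶜ.card : ℝ) = (m:ℝ) - j := by
      rw [Finset.card_compl, hscard, Fintype.card_fin, Nat.cast_sub hjlem]
    set S : ℝ := ∑ i' ∈ s, z i' with hS
    set a : ℝ := ∑ i ∈ sᶜ, z i with ha
    set c : ℝ := (m:ℝ) - j with hc
    have hac : a + S = (m:ℝ) * μ := by
      rw [hsumz, ha, hS, ← Finset.sum_add_sum_compl s z]; ring
    have ha0 : 0 ≤ a := Finset.sum_nonneg fun i _ => by rcases hz i with h|h <;> simp [h]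
    have hac1 : a ≤ c := by
      have h1 : a ≤ (sᶜ.card : ℝ) := by
        calc a ≤ ∑ _i ∈ sᶜ, (1:ℝ) :=
              Finset.sum_le_sum fun i _ => by rcases hz i with h|h <;> simp [h]
          _ = (sᶜ.card : ℝ) := by simp
      rwa [hccard] at h1
    set u : ℝ := lam * (((j:ℝ)+1) * μ - S)/((m:ℝ)-j-1) with hu
    set t' : ℝ := lam/((m:ℝ)-j-1) with ht'
    have hterm : ∀ i ∈ sᶜ,
        g (insert i s) = Real.exp u * ((1 - z i) + z i * Real.exp (-t')) := by
      intro i hi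
      have hins : ∑ i' ∈ insert i s, z i' = z i + S :=
        Finset.sum_insert (Finset.mem_compl.1 hi)
      rw [hg]
      simp only [hins]
      rcases hz i with h|h
      · rw [h]; simp [hu, hc]
      · rw [h]
        rw [show lam * (((j:ℝ)+1) * μ - (1 + S))/((m:ℝ)-j-1) = u + (-t') by
          rw [hu, ht']; field_simp; ring]
        rw [Real.exp_add]; ring
    rw [Finset.sum_congr rfl hterm, ← Finset.mul_sum]
    have hsplit : ∑ i ∈ sᶜ, ((1 - z i) + z i * Real.exp (-t'))
        = (c - a) + a * Real.exp (-t') := by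
      rw [Finset.sum_add_distrib, Finset.sum_sub_distrib, Finset.sum_const, ← Finset.sum_mul,
        ← ha, nsmul_eq_mul, mul_one, hccard]
    rw [hsplit]
    have hcne : c ≠ 0 := ne_of_gt (hc ▸ hcj)
    have hp : (c - a) + a * Real.exp (-t') = c * ((1 - a/c) + (a/c) * Real.exp (-t')) := by
      field_simp
    have hh := hoeff_two (a/c) (div_nonneg ha0 (le_of_lt (hc ▸ hcj)))
      ((div_le_one (hc ▸ hcj)).mpr hac1) (-t')
    have haval : a = (m:ℝ) * μ - S := by linarith
    have hexp : u + ((a/c) * (-t') + (-t')^2/8)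
        = lam * ((j:ℝ) * μ - S)/((m:ℝ)-j) + lam^2/(8*((m:ℝ)-j-1)^2) := by
      rw [hu, ht', haval, hc]
      have hne1 : (m:ℝ) - j ≠ 0 := by linarith
      have hne2 : (m:ℝ) - j - 1 ≠ 0 := by linarith
      field_simp
      ring
    calc Real.exp u * ((c - a) + a * Real.exp (-t'))
        = c * (Real.exp u * ((1 - a/c) + (a/c) * Real.exp (-t'))) := by rw [hp]; ring
      _ ≤ c * (Real.exp u * Real.exp ((a/c) * (-t') + (-t')^2/8)) := by
          apply mul_le_mul_of_nonneg_left _ (le_of_lt (hc ▸ hcj))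
          exact mul_le_mul_of_nonneg_left hh (le_of_lt (Real.exp_pos u))
      _ = c * Real.exp (u + ((a/c) * (-t') + (-t')^2/8)) := by rw [← Real.exp_add]
      _ = ((m:ℝ)-j) * (E * Real.exp (lam * ((j:ℝ) * μ - S)/((m:ℝ)-j))) := by
          rw [hexp, Real.exp_add, hE, hc]; ring
  -- combine
  set T1 : ℝ := ∑ t ∈ Finset.univ.powersetCard (j+1) (α := Fin m), g t with hT1
  set T0 : ℝ := ∑ s ∈ Finset.univ.powersetCard j (α := Fin m),
    Real.exp (lam * ((j:ℝ) * μ - ∑ i ∈ s, z i)/((m:ℝ)-j)) with hT0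
  have hmain : ((j:ℝ)+1) * T1 ≤ ((m:ℝ)-j) * E * T0 := by
    rw [hT1, sum_pc_succ j g, hT0, Finset.mul_sum]
    apply Finset.sum_le_sum
    intro s hs
    calc ∑ i ∈ sᶜ, g (insert i s) ≤ _ := inner s hs
      _ = ((m:ℝ)-j) * E * Real.exp (lam * ((j:ℝ) * μ - ∑ i' ∈ s, z i')/((m:ℝ)-j)) := by ring
  have hC1 : (0:ℝ) < (Nat.choose m (j+1) : ℝ) := by
    exact_mod_cast Nat.choose_pos (by omega)
  have hC0 : (0:ℝ) < (Nat.choose m j : ℝ) := by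
    exact_mod_cast Nat.choose_pos (by omega)
  have hchoose : ((m:ℝ)-j) * (Nat.choose m j : ℝ) = ((j:ℝ)+1) * (Nat.choose m (j+1) : ℝ) := by
    have h := Nat.choose_succ_right_eq m j
    have hjlem : j ≤ m := by omega
    have : ((Nat.choose m (j+1) * (j+1) : ℕ) : ℝ) = ((Nat.choose m j * (m - j) : ℕ) : ℝ) := by
      exact_mod_cast congrArg (Nat.cast (R := ℝ)) h
    push_cast [Nat.cast_sub hjlem] at this
    linarith
  have hT0n : 0 ≤ T0 := Finset.sum_nonneg fun s _ => le_of_lt (Real.exp_pos _)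
  have hEp : 0 < E := Real.exp_pos _
  rw [show E * (T0 / (Nat.choose m j : ℝ)) = (E * T0) / (Nat.choose m j : ℝ) by ring,
    div_le_div_iff₀ hC1 hC0]
  have h2 : ((j:ℝ)+1) * (T1 * (Nat.choose m j : ℝ))
      ≤ ((j:ℝ)+1) * (E * T0 * (Nat.choose m (j+1) : ℝ)) := by
    calc ((j:ℝ)+1) * (T1 * (Nat.choose m j : ℝ))
        = (((j:ℝ)+1) * T1) * (Nat.choose m j : ℝ) := by ring
      _ ≤ (((m:ℝ)-j) * E * T0) * (Nat.choose m j : ℝ) :=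
          mul_le_mul_of_nonneg_right hmain (le_of_lt hC0)
      _ = (E * T0) * (((m:ℝ)-j) * (Nat.choose m j : ℝ)) := by ring
      _ = (E * T0) * (((j:ℝ)+1) * (Nat.choose m (j+1) : ℝ)) := by rw [hchoose]
      _ = ((j:ℝ)+1) * (E * T0 * (Nat.choose m (j+1) : ℝ)) := by ring
  have hjp : (0:ℝ) < (j:ℝ)+1 := by positivity
  exact le_of_mul_le_mul_left h2 hjp

lemma mgf_bound (m : ℕ) (z : Fin m → ℝ) (hz : ∀ i, z i = 0 ∨ z i = 1) (lam : ℝ) :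
    ∀ k : ℕ, k < m →
    (∑ s ∈ Finset.univ.powersetCard k,
        Real.exp (lam * ((k:ℝ) * ((∑ i, z i)/m) - ∑ i ∈ s, z i)/((m:ℝ)-k)))
      / (Nat.choose m k : ℝ)
    ≤ Real.exp (lam^2/8 * ∑ j ∈ Finset.range k, 1/((m:ℝ)-j-1)^2) := by
  intro k
  induction k with
  | zero =>
    intro _
    simp [Finset.powersetCard_zero]
  | succ k ih =>
    intro hk1
    have hk : k < m := by omega
    have h1 := mgf_step m z hz k hk1 lam
    have h2 := ih hk
    have hcast : ((k+1 : ℕ) : ℝ) = (k:ℝ) + 1 := by push_cast; ring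
    calc (∑ t ∈ Finset.univ.powersetCard (k+1),
            Real.exp (lam * (((k+1:ℕ):ℝ) * ((∑ i, z i)/m) - ∑ i ∈ t, z i)/((m:ℝ)-(k+1:ℕ))))
          / (Nat.choose m (k+1) : ℝ)
        = (∑ t ∈ Finset.univ.powersetCard (k+1),
            Real.exp (lam * (((k:ℝ)+1) * ((∑ i, z i)/m) - ∑ i ∈ t, z i)/((m:ℝ)-k-1)))
          / (Nat.choose m (k+1) : ℝ) := by
          congr 1
          apply Finset.sum_congr rfl
          intro t _
          congr 1
          push_cast
          ring
      _ ≤ Real.exp (lam^2/(8*((m:ℝ)-k-1)^2)) *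
            ((∑ s ∈ Finset.univ.powersetCard k,
                Real.exp (lam * ((k:ℝ) * ((∑ i, z i)/m) - ∑ i ∈ s, z i)/((m:ℝ)-k)))
              / (Nat.choose m k : ℝ)) := h1
      _ ≤ Real.exp (lam^2/(8*((m:ℝ)-k-1)^2)) *
            Real.exp (lam^2/8 * ∑ j ∈ Finset.range k, 1/((m:ℝ)-j-1)^2) :=
          mul_le_mul_of_nonneg_left h2 (le_of_lt (Real.exp_pos _))
      _ = Real.exp (lam^2/8 * ∑ j ∈ Finset.range (k+1), 1/((m:ℝ)-j-1)^2) := by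
          have hx : ((m:ℝ)-(k:ℕ)-1) ≠ 0 := by
            have : ((k:ℝ)+1) < m := by exact_mod_cast hk1
            nlinarith
          rw [← Real.exp_add, Finset.sum_range_succ, mul_add,
            show lam^2/8 * (1/((m:ℝ)-(k:ℕ)-1)^2) = lam^2/(8*((m:ℝ)-k-1)^2) by
              field_simp,
            add_comm]

/-- Serfling's lower-tail bound: the probability (under uniform sampling of a
`k`-subset without replacement from `m` binary values) that the population mean
exceeds the sample mean by `ξ` is at most `exp(-2 m k ξ² / (n+1))`, `n = m - k`. -/
theorem serfling_lower_tail (m k : ℕ) (hk : 0 < k) (hkm : k ≤ m)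
    (z : Fin m → ℝ) (hz : ∀ i, z i = 0 ∨ z i = 1) (ξ : ℝ) (hξ : 0 < ξ) :
    (((Finset.univ.powersetCard k : Finset (Finset (Fin m))).filter
        (fun s => (∑ i ∈ s, z i) / k + ξ ≤ (∑ i, z i) / m)).card : ℝ) /
      ((Finset.univ.powersetCard k : Finset (Finset (Fin m))).card : ℝ)
      ≤ Real.exp (-(2 * m * k * ξ ^ 2) / ((m - k : ℕ) + 1)) := by
  rcases eq_or_lt_of_le hkm with heq | hlt
  · -- k = m : the event is empty
    have hempty : (Finset.univ.powersetCard k : Finset (Finset (Fin m))).filter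
        (fun s => (∑ i ∈ s, z i) / k + ξ ≤ (∑ i, z i) / m) = ∅ := by
      rw [Finset.filter_eq_empty_iff]
      intro s hs
      have hcard : s.card = k := (Finset.mem_powersetCard.1 hs).2
      have hsuniv : s = Finset.univ := by
        apply Finset.eq_univ_of_card
        rw [hcard, heq, Fintype.card_fin]
      rw [hsuniv, heq]
      intro habs
      have : ξ ≤ 0 := by
        have h0 : ((m:ℝ)) ≠ 0 := by
          have : 0 < m := by omega
          positivity
        nlinarith [habs]
      linarith
    rw [hempty]
    simp only [Finset.card_empty, Nat.cast_zero, zero_div]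
    exact (Real.exp_pos _).le
  · -- k < m
    have hm : 0 < m := by omega
    set μ : ℝ := (∑ i, z i)/m with hμ
    set nR : ℝ := ((m - k : ℕ) : ℝ) with hnRdef
    have hnR : nR = (m:ℝ) - k := by
      rw [hnRdef, Nat.cast_sub hkm]
    have hnR1 : (1:ℝ) ≤ nR := by
      rw [hnRdef]
      exact_mod_cast Nat.one_le_iff_ne_zero.2 (by omega)
    have hnRpos : (0:ℝ) < nR := by linarith
    have hkR : (0:ℝ) < (k:ℝ) := by exact_mod_cast hk
    have hmR : (0:ℝ) < (m:ℝ) := by exact_mod_cast hm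
    set lam : ℝ := 4*(m:ℝ)*nR*ξ/(nR+1) with hlamdef
    have hlam : 0 < lam := by rw [hlamdef]; positivity
    set T : ℝ := ∑ s ∈ (Finset.univ.powersetCard k : Finset (Finset (Fin m))),
      Real.exp (lam * ((k:ℝ) * μ - ∑ i ∈ s, z i)/((m:ℝ)-k)) with hT
    set F := (Finset.univ.powersetCard k : Finset (Finset (Fin m))).filter
      (fun s => (∑ i ∈ s, z i) / k + ξ ≤ (∑ i, z i) / m) with hF
    have hCcard : (((Finset.univ.powersetCard k : Finset (Finset (Fin m)))).card : ℝ)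
        = (Nat.choose m k : ℝ) := by
      rw [Finset.card_powersetCard, Finset.card_univ, Fintype.card_fin]
    have hCpos : (0:ℝ) < (Nat.choose m k : ℝ) := by
      exact_mod_cast Nat.choose_pos hkm
    -- Chernoff step
    have hterm : ∀ s ∈ F, (1:ℝ) ≤ Real.exp (-(lam*(k:ℝ)*ξ/((m:ℝ)-k))) *
        Real.exp (lam * ((k:ℝ) * μ - ∑ i ∈ s, z i)/((m:ℝ)-k)) := by
      intro s hs
      have hPs : (∑ i ∈ s, z i) / k + ξ ≤ μ := (Finset.mem_filter.1 hs).2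
      have hdev : (∑ i ∈ s, z i) + (k:ℝ)*ξ ≤ (k:ℝ)*μ := by
        have h1 : (k:ℝ) * ((∑ i ∈ s, z i) / k + ξ) ≤ (k:ℝ) * μ :=
          mul_le_mul_of_nonneg_left hPs (le_of_lt hkR)
        have h2 : (k:ℝ) * ((∑ i ∈ s, z i) / k) = ∑ i ∈ s, z i := by
          field_simp
        nlinarith [h1, h2]
      rw [← Real.exp_add]
      apply Real.one_le_exp
      have hmk : (0:ℝ) < (m:ℝ) - k := by linarith [hnR ▸ hnRpos]
      have : -(lam*(k:ℝ)*ξ/((m:ℝ)-k)) + lam * ((k:ℝ) * μ - ∑ i ∈ s, z i)/((m:ℝ)-k)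
          = lam * (((k:ℝ) * μ - ∑ i ∈ s, z i) - (k:ℝ)*ξ)/((m:ℝ)-k) := by
        field_simp
        ring
      rw [this]
      apply div_nonneg _ (le_of_lt hmk)
      apply mul_nonneg (le_of_lt hlam)
      linarith
    have step1 : ((F.card : ℕ) : ℝ) ≤ Real.exp (-(lam*(k:ℝ)*ξ/((m:ℝ)-k))) * T := by
      have h0 : ((F.card : ℕ) : ℝ) = ∑ _s ∈ F, (1:ℝ) := by simp
      rw [h0, hT, Finset.mul_sum]
      calc ∑ _s ∈ F, (1:ℝ)
          ≤ ∑ s ∈ F, Real.exp (-(lam*(k:ℝ)*ξ/((m:ℝ)-k))) *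
              Real.exp (lam * ((k:ℝ) * μ - ∑ i ∈ s, z i)/((m:ℝ)-k)) :=
            Finset.sum_le_sum hterm
        _ ≤ ∑ s ∈ (Finset.univ.powersetCard k : Finset (Finset (Fin m))),
              Real.exp (-(lam*(k:ℝ)*ξ/((m:ℝ)-k))) *
              Real.exp (lam * ((k:ℝ) * μ - ∑ i ∈ s, z i)/((m:ℝ)-k)) := by
            apply Finset.sum_le_sum_of_subset_of_nonneg
            · rw [hF]; exact Finset.filter_subset _ _
            · intro s _ _
              positivity
    -- put it together
    rw [hCcard]
    have hmain : ((F.card : ℕ) : ℝ) / (Nat.choose m k : ℝ)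
        ≤ Real.exp (-(lam*(k:ℝ)*ξ/((m:ℝ)-k))) * (T / (Nat.choose m k : ℝ)) := by
      rw [div_le_iff₀ hCpos]
      calc ((F.card : ℕ) : ℝ) ≤ Real.exp (-(lam*(k:ℝ)*ξ/((m:ℝ)-k))) * T := step1
        _ = Real.exp (-(lam*(k:ℝ)*ξ/((m:ℝ)-k))) * (T / (Nat.choose m k : ℝ))
            * (Nat.choose m k : ℝ) := by
            field_simp
    have hmgf := mgf_bound m z hz lam k hlt
    -- sum bound
    have hSig := sum_inv_sq (m - k) (by omega) k
    have hmk' : (m - k) + k = m := by omega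
    rw [hmk'] at hSig
    have hnRk : nR + (k:ℝ) = (m:ℝ) := by rw [hnR]; ring
    rw [← hnRdef, hnRk] at hSig
    have hexpbound : lam^2/8 * ∑ j ∈ Finset.range k, 1/((m:ℝ)-j-1)^2
        ≤ lam^2/8 * ((k:ℝ) * (nR + 1) / ((m:ℝ) * nR^2)) := by
      apply mul_le_mul_of_nonneg_left hSig (by positivity)
    have hfinal : Real.exp (-(lam*(k:ℝ)*ξ/((m:ℝ)-k))) *
        Real.exp (lam^2/8 * ((k:ℝ) * (nR + 1) / ((m:ℝ) * nR^2)))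
        = Real.exp (-(2 * m * k * ξ ^ 2) / (nR + 1)) := by
      rw [← Real.exp_add]
      congr 1
      rw [← hnR, hlamdef]
      have h1 : nR ≠ 0 := ne_of_gt hnRpos
      have h2 : nR + 1 ≠ 0 := by positivity
      have h3 : (m:ℝ) ≠ 0 := ne_of_gt hmR
      field_simp
      ring
    calc ((F.card : ℕ) : ℝ) / (Nat.choose m k : ℝ)
        ≤ Real.exp (-(lam*(k:ℝ)*ξ/((m:ℝ)-k))) * (T / (Nat.choose m k : ℝ)) := hmain
      _ ≤ Real.exp (-(lam*(k:ℝ)*ξ/((m:ℝ)-k))) *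
            Real.exp (lam^2/8 * ∑ j ∈ Finset.range k, 1/((m:ℝ)-j-1)^2) :=
          mul_le_mul_of_nonneg_left hmgf (le_of_lt (Real.exp_pos _))
      _ ≤ Real.exp (-(lam*(k:ℝ)*ξ/((m:ℝ)-k))) *
            Real.exp (lam^2/8 * ((k:ℝ) * (nR + 1) / ((m:ℝ) * nR^2))) :=
          mul_le_mul_of_nonneg_left (Real.exp_le_exp.2 hexpbound) (le_of_lt (Real.exp_pos _))
      _ = Real.exp (-(2 * m * k * ξ ^ 2) / (nR + 1)) := hfinal
end

section
/- Serfling bound in upper-tail form: let a population of m binary values have mean μ, and draw k of them uniformly without replacement with sample mean X̄_k; then for λ > 0, Pr[X̄_k - μ ≥ λ] ≤ exp(-2 k λ² / (1 - (k-1)/m)), and in particular Pr[X̄_k - μ ≥ λ] ≤ exp(-2 m k λ²/(m - k + 1)). -/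
open Finset Classical

lemma bernoulli_pos (p : ℝ) (hp0 : 0 ≤ p) (hp1 : p ≤ 1) (v : ℝ) :
    0 < 1 - p + p * Real.exp v := by
  have hE := Real.exp_pos v
  rcases le_or_gt (Real.exp v) 1 with h | h
  · nlinarith [mul_nonneg (sub_nonneg.2 hp1) (sub_nonneg.2 h)]
  · nlinarith [mul_nonneg hp0 (by linarith : (0:ℝ) ≤ Real.exp v - 1)]

lemma bernoulli_mgf_le (p : ℝ) (hp0 : 0 ≤ p) (hp1 : p ≤ 1) (u : ℝ) :
    1 - p + p * Real.exp u ≤ Real.exp (p * u + u ^ 2 / 8) := by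
  have hD : ∀ v : ℝ, 0 < 1 - p + p * Real.exp v := bernoulli_pos p hp0 hp1
  -- φ is the derivative of g(v) = p v + v²/8 - log (D v)
  set φ : ℝ → ℝ := fun v => p + v / 4 - p * Real.exp v / (1 - p + p * Real.exp v)
    with hφdef
  set g : ℝ → ℝ := fun v => p * v + v ^ 2 / 8 - Real.log (1 - p + p * Real.exp v)
    with hgdef
  have hDderiv : ∀ v : ℝ, HasDerivAt (fun x => 1 - p + p * Real.exp x)
      (p * Real.exp v) v := fun v => by
    simpa using ((Real.hasDerivAt_exp v).const_mul p).const_add (1 - p)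
  have hgderiv : ∀ v : ℝ, HasDerivAt g (φ v) v := by
    intro v
    have h1 : HasDerivAt (fun x : ℝ => p * x) p v := by
      simpa using (hasDerivAt_id v).const_mul p
    have h2 : HasDerivAt (fun x : ℝ => x ^ 2 / 8) (v / 4) v := by
      have := (hasDerivAt_pow 2 v).div_const 8
      exact this.congr_deriv (by norm_num; ring)
    have h3 : HasDerivAt (fun x => Real.log (1 - p + p * Real.exp x))
        (p * Real.exp v / (1 - p + p * Real.exp v)) v :=
      (hDderiv v).log (hD v).ne'
    exact (h1.add h2).sub h3
  have hφderiv : ∀ v : ℝ, HasDerivAt φ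
      (1 / 4 - (p * Real.exp v / (1 - p + p * Real.exp v)
        - (p * Real.exp v / (1 - p + p * Real.exp v)) ^ 2)) v := by
    intro v
    have h2 : HasDerivAt (fun x : ℝ => x / 4) (1 / 4 : ℝ) v := by
      simpa using (hasDerivAt_id v).div_const 4
    have h3 : HasDerivAt (fun x => p * Real.exp x / (1 - p + p * Real.exp x))
        ((p * Real.exp v * (1 - p + p * Real.exp v) - p * Real.exp v * (p * Real.exp v))
          / (1 - p + p * Real.exp v) ^ 2) v :=
      ((Real.hasDerivAt_exp v).const_mul p).div (hDderiv v) (hD v).ne'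
    have habs : ∀ E d : ℝ, d ≠ 0 → (E * d - E * E) / d ^ 2 = E / d - (E / d) ^ 2 := by
      intro E d hd; field_simp
    have heq := habs (p * Real.exp v) (1 - p + p * Real.exp v) (hD v).ne' 
    rw [heq] at h3
    have := ((hasDerivAt_const v p).add h2).sub h3
    simp only [zero_add] at this
    exact this
  have hφmono : Monotone φ := by
    apply monotone_of_deriv_nonneg (fun v => (hφderiv v).differentiableAt)
    intro v
    rw [(hφderiv v).deriv]
    nlinarith [sq_nonneg (p * Real.exp v / (1 - p + p * Real.exp v) - 1 / 2)]
  have hφ0 : φ 0 = 0 := by simp [hφdef]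
  have hg0 : g 0 = 0 := by simp [hgdef]
  have hgdiff : Differentiable ℝ g := fun v => (hgderiv v).differentiableAt
  have hgnonneg : ∀ v : ℝ, 0 ≤ g v := by
    intro v
    rcases le_or_gt 0 v with h | h
    · have hmono : MonotoneOn g (Set.Ici (0:ℝ)) := by
        apply monotoneOn_of_deriv_nonneg (convex_Ici 0) hgdiff.continuous.continuousOn
          hgdiff.differentiableOn
        intro x hx
        rw [interior_Ici] at hx
        rw [(hgderiv x).deriv, ← hφ0]
        exact hφmono hx.le
      calc (0:ℝ) = g 0 := hg0.symm
        _ ≤ g v := hmono Set.self_mem_Ici h h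
    · have hanti : AntitoneOn g (Set.Iic (0:ℝ)) := by
        apply antitoneOn_of_deriv_nonpos (convex_Iic 0) hgdiff.continuous.continuousOn
          hgdiff.differentiableOn
        intro x hx
        rw [interior_Iic] at hx
        rw [(hgderiv x).deriv, ← hφ0]
        exact hφmono hx.le
      calc (0:ℝ) = g 0 := hg0.symm
        _ ≤ g v := hanti h.le Set.self_mem_Iic h.le
  have := hgnonneg u
  rw [hgdef] at this
  simp only at this
  rw [← Real.log_le_iff_le_exp (hD u)]
  linarith

lemma sum_powersetCard_succ {α : Type*} [Fintype α] [DecidableEq α] (j : ℕ)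
    (g : Finset α → ℝ) :
    ((j : ℝ) + 1) * ∑ T ∈ (univ : Finset α).powersetCard (j + 1), g T
      = ∑ T ∈ (univ : Finset α).powersetCard j, ∑ i ∈ Tᶜ, g (insert i T) := by
  have key : ∑ T ∈ (univ : Finset α).powersetCard (j + 1), ∑ _i ∈ T, g T
      = ∑ T ∈ (univ : Finset α).powersetCard j, ∑ i ∈ Tᶜ, g (insert i T) := by
    rw [Finset.sum_sigma', Finset.sum_sigma']
    apply Finset.sum_nbij' (fun x => (⟨x.1.erase x.2, x.2⟩ :
        Σ _T : Finset α, α)) (fun x => (⟨insert x.2 x.1, x.2⟩ : Σ _T : Finset α, α))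
    · rintro ⟨T, i⟩ hTi
      simp only [Finset.mem_sigma, Finset.mem_powersetCard_univ] at hTi ⊢
      refine ⟨?_, ?_⟩
      · rw [Finset.card_erase_of_mem hTi.2, hTi.1]; omega
      · simp [Finset.mem_compl]
    · rintro ⟨T, i⟩ hTi
      simp only [Finset.mem_sigma, Finset.mem_powersetCard_univ, Finset.mem_compl] at hTi ⊢
      refine ⟨?_, Finset.mem_insert_self _ _⟩
      rw [Finset.card_insert_of_notMem hTi.2, hTi.1]
    · rintro ⟨T, i⟩ hTi
      simp only [Finset.mem_sigma, Finset.mem_powersetCard_univ] at hTi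
      simp [Finset.insert_erase hTi.2]
    · rintro ⟨T, i⟩ hTi
      simp only [Finset.mem_sigma, Finset.mem_powersetCard_univ, Finset.mem_compl] at hTi
      simp [Finset.erase_insert hTi.2]
    · rintro ⟨T, i⟩ hTi
      simp only [Finset.mem_sigma, Finset.mem_powersetCard_univ] at hTi
      rw [Finset.insert_erase hTi.2]
  rw [← key, Finset.mul_sum]
  apply Finset.sum_congr rfl
  intro T hT
  rw [Finset.mem_powersetCard_univ] at hT
  rw [Finset.sum_const, hT, nsmul_eq_mul]
  push_cast
  ring

lemma serfling_step (m : ℕ) (z : Fin m → ℝ) (hz : ∀ i, z i = 0 ∨ z i = 1)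
    (j : ℕ) (hj : j < m) (u : ℝ) :
    ((j : ℝ) + 1) * ∑ T ∈ (univ : Finset (Fin m)).powersetCard (j + 1),
        Real.exp (u * ((∑ i ∈ T, z i) - ((j : ℝ) + 1) * ((∑ i, z i) / m)))
      ≤ ((m : ℝ) - j) * Real.exp (u ^ 2 / 8) *
        ∑ T ∈ (univ : Finset (Fin m)).powersetCard j,
          Real.exp (u * ((m : ℝ) - j - 1) / ((m : ℝ) - j) *
            ((∑ i ∈ T, z i) - (j : ℝ) * ((∑ i, z i) / m))) := by
  have hm0 : (0 : ℝ) < m := by exact_mod_cast Nat.zero_lt_of_lt hj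
  have hmj : (0 : ℝ) < (m : ℝ) - j := by
    have : (j : ℝ) < m := by exact_mod_cast hj
    linarith
  rw [sum_powersetCard_succ]
  rw [Finset.mul_sum]
  apply Finset.sum_le_sum
  intro T hT
  rw [Finset.mem_powersetCard_univ] at hT
  set M : ℝ := ∑ i, z i with hM
  set s : ℝ := ∑ i ∈ T, z i with hs
  have hcompl : Tᶜ.card = m - j := by
    rw [Finset.card_compl, hT]; simp
  have hcomplR : (Tᶜ.card : ℝ) = (m : ℝ) - j := by
    rw [hcompl, Nat.cast_sub hj.le]
  have hsumc : ∑ i ∈ Tᶜ, z i = M - s := by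
    have := Finset.sum_add_sum_compl T z
    rw [← hM, ← hs] at this; linarith
  -- rewrite each inner term
  have hins : ∀ i ∈ Tᶜ, Real.exp (u * ((∑ x ∈ insert i T, z x) - ((j:ℝ)+1) * (M / m)))
      = Real.exp (u * (s - ((j:ℝ)+1) * (M / m))) * Real.exp (u * z i) := by
    intro i hi
    rw [Finset.sum_insert (Finset.mem_compl.mp hi), ← Real.exp_add]
    rw [← hs]
    ring_nf
  rw [Finset.sum_congr rfl hins, ← Finset.mul_sum]
  -- evaluate the inner sum over the complement
  have hone : ∀ i ∈ Tᶜ, Real.exp (u * z i) = 1 + z i * (Real.exp u - 1) := by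
    intro i _
    rcases hz i with h | h <;> simp [h]
  rw [Finset.sum_congr rfl hone]
  rw [Finset.sum_add_distrib, Finset.sum_const, ← Finset.sum_mul, hsumc]
  set ν : ℝ := (M - s) / ((m : ℝ) - j) with hν
  have hMs0 : 0 ≤ M - s := by
    rw [← hsumc]
    exact Finset.sum_nonneg fun i _ => by rcases hz i with h | h <;> simp [h]
  have hMs1 : M - s ≤ (m : ℝ) - j := by
    rw [← hsumc, ← hcomplR]
    calc ∑ i ∈ Tᶜ, z i ≤ ∑ _i ∈ Tᶜ, (1:ℝ) :=
          Finset.sum_le_sum fun i _ => by rcases hz i with h | h <;> simp [h]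
      _ = (Tᶜ.card : ℝ) := by simp
  have hν0 : 0 ≤ ν := div_nonneg hMs0 hmj.le
  have hν1 : ν ≤ 1 := (div_le_one hmj).mpr hMs1
  have hval : (Tᶜ.card) • (1:ℝ) + (M - s) * (Real.exp u - 1)
      = ((m : ℝ) - j) * (1 - ν + ν * Real.exp u) := by
    rw [nsmul_eq_mul, mul_one, hcomplR, hν]
    field_simp
    ring
  rw [hval]
  have hbern := bernoulli_mgf_le ν hν0 hν1 u
  have hexpid : u * (s - ((j:ℝ)+1) * (M / m)) + (ν * u + u ^ 2 / 8)
      = u ^ 2 / 8 + u * ((m:ℝ) - j - 1) / ((m:ℝ) - j) * (s - (j:ℝ) * (M / m)) := by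
    rw [hν]
    field_simp
    ring
  calc Real.exp (u * (s - ((j:ℝ)+1) * (M / m))) * (((m:ℝ) - j) * (1 - ν + ν * Real.exp u))
      ≤ Real.exp (u * (s - ((j:ℝ)+1) * (M / m))) * (((m:ℝ) - j) * Real.exp (ν * u + u ^ 2 / 8)) := by
        apply mul_le_mul_of_nonneg_left _ (Real.exp_pos _).le
        exact mul_le_mul_of_nonneg_left hbern hmj.le
    _ = ((m:ℝ) - j) * Real.exp (u ^ 2 / 8) *
        Real.exp (u * ((m:ℝ) - j - 1) / ((m:ℝ) - j) * (s - (j:ℝ) * (M / m))) := by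
        rw [mul_comm (Real.exp _) (((m:ℝ) - j) * Real.exp (ν * u + u ^ 2 / 8)), mul_assoc,
          ← Real.exp_add, mul_assoc, ← Real.exp_add]
        congr 1
        rw [add_comm] at hexpid
        rw [hexpid]

lemma serfling_mgf (m k : ℕ) (z : Fin m → ℝ) (hz : ∀ i, z i = 0 ∨ z i = 1)
    (hkm : k < m) (t : ℝ) : ∀ j, j ≤ k →
    ∑ T ∈ (univ : Finset (Fin m)).powersetCard j,
        Real.exp (t / ((m : ℝ) - j) * ((∑ i ∈ T, z i) - (j : ℝ) * ((∑ i, z i) / m)))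
      ≤ (m.choose j : ℝ) *
        Real.exp (t ^ 2 / 8 * ∑ i ∈ Finset.range j, (1 / ((m : ℝ) - 1 - i)) ^ 2) := by
  intro j
  induction j with
  | zero => simp
  | succ j ih =>
    intro hjk
    have hj1m : j + 1 < m := lt_of_le_of_lt hjk hkm
    have hjm : j < m := by omega
    have ihj := ih (by omega)
    have hmj1 : (0:ℝ) < (m : ℝ) - j - 1 := by
      have : ((j:ℝ) + 1) < m := by exact_mod_cast hj1m
      linarith
    have hmj : (0:ℝ) < (m : ℝ) - j := by linarith
    have hstep := serfling_step m z hz j hjm (t / ((m : ℝ) - j - 1))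
    have hu : t / ((m : ℝ) - j - 1) * ((m : ℝ) - j - 1) / ((m : ℝ) - j)
        = t / ((m : ℝ) - j) := by
      field_simp
    rw [hu] at hstep
    -- also the left side of hstep matches our sum with parameter t/(m-(j+1))
    have hcast : ((m : ℝ) - ((j:ℕ)+1 : ℕ)) = (m : ℝ) - j - 1 := by push_cast; ring
    have hj1pos : (0:ℝ) < (j : ℝ) + 1 := by positivity
    have hchoose : ((m : ℝ) - j) * (m.choose j : ℝ) = ((j : ℝ) + 1) * (m.choose (j+1) : ℝ) := by
      have h := Nat.add_one_mul_choose_eq m j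
      -- (j+1) * m.choose (j+1) = (m - j) * m.choose j
      have h2 : (j + 1) * m.choose (j + 1) = (m - j) * m.choose j := by
        rw [mul_comm ((j:ℕ)+1) _, Nat.choose_succ_right_eq, mul_comm]
      have h3 : (((j + 1) * m.choose (j + 1) : ℕ) : ℝ) = (((m - j) * m.choose j : ℕ) : ℝ) := by
        rw [h2]
      push_cast [Nat.cast_sub hjm.le] at h3
      linarith
    rw [Finset.sum_range_succ]
    have hsq : (t / ((m : ℝ) - j - 1)) ^ 2 / 8 = t ^ 2 / 8 * (1 / ((m : ℝ) - 1 - j)) ^ 2 := by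
      have : ((m : ℝ) - 1 - j) = (m : ℝ) - j - 1 := by ring
      rw [this, div_pow, div_pow, one_pow, div_div, div_mul_eq_mul_div, mul_one_div, div_div]
    -- combine
    have hchain : ((j : ℝ) + 1) * ∑ T ∈ (univ : Finset (Fin m)).powersetCard (j + 1),
        Real.exp (t / ((m : ℝ) - ((j:ℕ)+1:ℕ)) * ((∑ i ∈ T, z i) - ((j:ℕ)+1:ℕ) * ((∑ i, z i) / m)))
        ≤ ((m : ℝ) - j) * Real.exp ((t / ((m : ℝ) - j - 1)) ^ 2 / 8) *
          ((m.choose j : ℝ) *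
            Real.exp (t ^ 2 / 8 * ∑ i ∈ Finset.range j, (1 / ((m : ℝ) - 1 - i)) ^ 2)) := by
      refine le_trans ?_ (mul_le_mul_of_nonneg_left ihj (by positivity))
      convert hstep using 4
      · rfl
      · push_cast; ring
    have hfin : ((m : ℝ) - j) * Real.exp ((t / ((m : ℝ) - j - 1)) ^ 2 / 8) *
          ((m.choose j : ℝ) *
            Real.exp (t ^ 2 / 8 * ∑ i ∈ Finset.range j, (1 / ((m : ℝ) - 1 - i)) ^ 2))
        = ((j : ℝ) + 1) * ((m.choose (j+1) : ℝ) *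
            Real.exp ((t ^ 2 / 8 * ∑ i ∈ Finset.range j, (1 / ((m : ℝ) - 1 - i)) ^ 2)
              + t ^ 2 / 8 * (1 / ((m : ℝ) - 1 - j)) ^ 2)) := by
      rw [Real.exp_add, ← hsq]
      linear_combination (Real.exp ((t / ((m : ℝ) - j - 1)) ^ 2 / 8) *
        Real.exp (t ^ 2 / 8 * ∑ i ∈ Finset.range j, (1 / ((m : ℝ) - 1 - i)) ^ 2)) * hchoose
    rw [hfin] at hchain
    have := le_of_mul_le_mul_left hchain hj1pos
    calc ∑ T ∈ (univ : Finset (Fin m)).powersetCard (j + 1),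
          Real.exp (t / ((m : ℝ) - ((j:ℕ)+1:ℕ)) * ((∑ i ∈ T, z i) - ((j:ℕ)+1:ℕ) * ((∑ i, z i) / m)))
        ≤ _ := this
      _ = (m.choose (j+1) : ℝ) *
          Real.exp (t ^ 2 / 8 * (∑ i ∈ Finset.range j, (1 / ((m : ℝ) - 1 - i)) ^ 2
            + (1 / ((m : ℝ) - 1 - j)) ^ 2)) := by
        congr 1
        exact congrArg Real.exp (by ring)


lemma serfling_term_bound (a b : ℝ) (ha : 0 < a) (hab : a ≤ b) :
    a ^ 2 * (1 / b) ^ 2 ≤ a * (a + 1) * (1 / b - 1 / (b + 1)) := by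
  have hb : 0 < b := lt_of_lt_of_le ha hab
  have hb1 : 0 < b + 1 := by linarith
  have h1 : 1 / b - 1 / (b + 1) = 1 / (b * (b + 1)) := by field_simp; ring
  rw [h1, div_pow, one_pow, mul_one_div, mul_one_div]
  rw [div_le_div_iff₀ (by positivity) (by positivity)]
  nlinarith [mul_nonneg (mul_nonneg ha.le hb.le) (sub_nonneg.2 hab)]

lemma serfling_sum_bound (m k : ℕ) (hkm : k < m) :
    ((m : ℝ) - k) ^ 2 * ∑ i ∈ Finset.range k, (1 / ((m : ℝ) - 1 - i)) ^ 2
      ≤ (k : ℝ) * ((m : ℝ) - k + 1) / m := by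
  have hm0 : (0 : ℝ) < m := by
    have : 0 < m := by omega
    exact_mod_cast this
  have hmk : (0 : ℝ) < (m : ℝ) - k := by
    have : (k : ℝ) < m := by exact_mod_cast hkm
    linarith
  rw [Finset.mul_sum]
  calc ∑ i ∈ Finset.range k, ((m : ℝ) - k) ^ 2 * (1 / ((m : ℝ) - 1 - i)) ^ 2
      ≤ ∑ i ∈ Finset.range k,
          ((m : ℝ) - k) * (((m : ℝ) - k) + 1) * (1 / ((m : ℝ) - (i + 1)) - 1 / ((m : ℝ) - i)) := by
        apply Finset.sum_le_sum
        intro i hi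
        rw [Finset.mem_range] at hi
        have hik : (i : ℝ) ≤ (k : ℝ) - 1 := by
          have : (i : ℝ) + 1 ≤ k := by exact_mod_cast hi
          linarith
        have h1 : ((m : ℝ) - 1 - i) = ((m : ℝ) - (i + 1)) := by ring
        have h2 : ((m : ℝ) - 1 - i) + 1 = ((m : ℝ) - i) := by ring
        calc ((m : ℝ) - k) ^ 2 * (1 / ((m : ℝ) - 1 - i)) ^ 2
            ≤ ((m : ℝ) - k) * (((m : ℝ) - k) + 1) *
                (1 / ((m : ℝ) - 1 - i) - 1 / (((m : ℝ) - 1 - i) + 1)) :=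
              serfling_term_bound _ _ hmk (by linarith)
          _ = ((m : ℝ) - k) * (((m : ℝ) - k) + 1) *
                (1 / ((m : ℝ) - (i + 1)) - 1 / ((m : ℝ) - i)) := by
              rw [h1, show ((m:ℝ) - (i + 1)) + 1 = (m:ℝ) - i by ring]
    _ = ((m : ℝ) - k) * (((m : ℝ) - k) + 1) * (1 / ((m : ℝ) - k) - 1 / ((m : ℝ) - 0)) := by
        rw [← Finset.mul_sum]
        congr 1
        have := Finset.sum_range_sub (fun i => 1 / ((m : ℝ) - i)) k
        push_cast at this ⊢
        linarith
    _ = (k : ℝ) * ((m : ℝ) - k + 1) / m := by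
        rw [sub_zero]
        field_simp
        ring

/-- Serfling's upper-tail bound for sampling without replacement from a binary
population: `Pr[X̄_k - μ ≥ λ] ≤ exp(-2kλ²/(1-(k-1)/m))`, and in particular
`Pr[X̄_k - μ ≥ λ] ≤ exp(-2mkλ²/(m-k+1))`. -/
theorem serfling_upper_tail (m k : ℕ) (hk : 0 < k) (hkm : k ≤ m)
    (z : Fin m → ℝ) (hz : ∀ i, z i = 0 ∨ z i = 1) (lam : ℝ) (hlam : 0 < lam) :
    (((Finset.univ.powersetCard k : Finset (Finset (Fin m))).filter
          (fun s => lam ≤ (∑ i ∈ s, z i) / k - (∑ i, z i) / m)).card : ℝ) /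
        ((Finset.univ.powersetCard k : Finset (Finset (Fin m))).card : ℝ)
      ≤ Real.exp (-(2 * k * lam ^ 2) / (1 - ((k : ℝ) - 1) / m)) ∧
    (((Finset.univ.powersetCard k : Finset (Finset (Fin m))).filter
          (fun s => lam ≤ (∑ i ∈ s, z i) / k - (∑ i, z i) / m)).card : ℝ) /
        ((Finset.univ.powersetCard k : Finset (Finset (Fin m))).card : ℝ)
      ≤ Real.exp (-(2 * m * k * lam ^ 2) / ((m : ℝ) - (k : ℝ) + 1)) := by
  have hm : 0 < m := lt_of_lt_of_le hk hkm
  have hm0 : (0 : ℝ) < m := by exact_mod_cast hm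
  have hkR : (0 : ℝ) < k := by exact_mod_cast hk
  have hkmR : (k : ℝ) ≤ m := by exact_mod_cast hkm
  have hmk1 : (0 : ℝ) < (m : ℝ) - k + 1 := by linarith
  have hexpeq : Real.exp (-(2 * k * lam ^ 2) / (1 - ((k : ℝ) - 1) / m))
      = Real.exp (-(2 * m * k * lam ^ 2) / ((m : ℝ) - (k : ℝ) + 1)) := by
    have hden : (1 : ℝ) - ((k : ℝ) - 1) / m = ((m : ℝ) - k + 1) / m := by
      field_simp
      ring
    congr 1
    rw [hden, div_div_eq_mul_div]
    congr 1
    ring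
  suffices h : (((Finset.univ.powersetCard k : Finset (Finset (Fin m))).filter
          (fun s => lam ≤ (∑ i ∈ s, z i) / k - (∑ i, z i) / m)).card : ℝ) /
        ((Finset.univ.powersetCard k : Finset (Finset (Fin m))).card : ℝ)
      ≤ Real.exp (-(2 * m * k * lam ^ 2) / ((m : ℝ) - (k : ℝ) + 1)) by
    exact ⟨hexpeq ▸ h, h⟩
  rcases eq_or_lt_of_le hkm with rfl | hkm'
  · -- k = m : the sample is the whole population, the event is empty
    have hempty : (Finset.univ.powersetCard k : Finset (Finset (Fin k))).filter
        (fun s => lam ≤ (∑ i ∈ s, z i) / k - (∑ i, z i) / k) = ∅ := by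
      rw [Finset.filter_eq_empty_iff]
      intro T hT
      rw [Finset.mem_powersetCard_univ] at hT
      have hTuniv : T = Finset.univ := Finset.eq_univ_of_card T (by simp [hT])
      rw [hTuniv]
      simp only [not_le]
      have : (∑ i, z i) / (k : ℝ) - (∑ i, z i) / k = 0 := by ring
      rw [this]
      exact hlam
    rw [hempty]
    simp only [Finset.card_empty, Nat.cast_zero, zero_div]
    exact (Real.exp_pos _).le
  · -- k < m
    set M : ℝ := ∑ i, z i with hM
    set τ : ℝ := 4 * lam * m / ((m : ℝ) - k + 1) with hτdef
    have hτ : 0 < τ := by positivity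
    have hmkR : (0 : ℝ) < (m : ℝ) - k := by
      have : (k : ℝ) < m := by exact_mod_cast hkm'
      linarith
    have hCpos : (0 : ℝ) < (m.choose k : ℝ) := by
      exact_mod_cast Nat.choose_pos hkm
    have hcardpc : ((Finset.univ.powersetCard k : Finset (Finset (Fin m))).card : ℝ)
        = (m.choose k : ℝ) := by
      rw [Finset.card_powersetCard, Finset.card_univ, Fintype.card_fin]
    -- Chernoff / Markov step
    have hcher : (((Finset.univ.powersetCard k : Finset (Finset (Fin m))).filter
          (fun s => lam ≤ (∑ i ∈ s, z i) / k - (∑ i, z i) / m)).card : ℝ)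
          * Real.exp (τ * ((k : ℝ) * lam))
        ≤ ∑ T ∈ (Finset.univ : Finset (Fin m)).powersetCard k,
            Real.exp (τ * ((∑ i ∈ T, z i) - (k : ℝ) * (M / m))) := by
      calc (((Finset.univ.powersetCard k : Finset (Finset (Fin m))).filter
              (fun s => lam ≤ (∑ i ∈ s, z i) / k - (∑ i, z i) / m)).card : ℝ)
              * Real.exp (τ * ((k : ℝ) * lam))
          = ∑ _T ∈ (Finset.univ.powersetCard k : Finset (Finset (Fin m))).filter
              (fun s => lam ≤ (∑ i ∈ s, z i) / k - (∑ i, z i) / m),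
              Real.exp (τ * ((k : ℝ) * lam)) := by
            rw [Finset.sum_const, nsmul_eq_mul]
        _ ≤ ∑ T ∈ (Finset.univ.powersetCard k : Finset (Finset (Fin m))).filter
              (fun s => lam ≤ (∑ i ∈ s, z i) / k - (∑ i, z i) / m),
              Real.exp (τ * ((∑ i ∈ T, z i) - (k : ℝ) * (M / m))) := by
            apply Finset.sum_le_sum
            intro T hT
            rw [Finset.mem_filter] at hT
            apply Real.exp_le_exp.mpr
            apply mul_le_mul_of_nonneg_left _ hτ.le
            have h1 : lam ≤ (∑ i ∈ T, z i) / k - M / m := hT.2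
            have h2 : (k : ℝ) * lam ≤ (k : ℝ) * ((∑ i ∈ T, z i) / k - M / m) :=
              mul_le_mul_of_nonneg_left h1 hkR.le
            calc (k : ℝ) * lam ≤ (k : ℝ) * ((∑ i ∈ T, z i) / k - M / m) := h2
              _ = (∑ i ∈ T, z i) - (k : ℝ) * (M / m) := by field_simp
        _ ≤ ∑ T ∈ (Finset.univ : Finset (Fin m)).powersetCard k,
              Real.exp (τ * ((∑ i ∈ T, z i) - (k : ℝ) * (M / m))) := by
            apply Finset.sum_le_sum_of_subset_of_nonneg (Finset.filter_subset _ _)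
            intro T _ _
            exact (Real.exp_pos _).le
    -- MGF bound
    have hmgf := serfling_mgf m k z hz hkm' (τ * ((m : ℝ) - k)) k le_rfl
    rw [mul_div_assoc, div_self hmkR.ne', mul_one] at hmgf
    -- bound on the variance sum
    have hB := serfling_sum_bound m k hkm'
    have hBexp : Real.exp ((τ * ((m : ℝ) - k)) ^ 2 / 8 *
          ∑ i ∈ Finset.range k, (1 / ((m : ℝ) - 1 - i)) ^ 2)
        ≤ Real.exp (τ ^ 2 * ((k : ℝ) * ((m : ℝ) - k + 1) / m) / 8) := by
      apply Real.exp_le_exp.mpr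
      have h1 : (τ * ((m : ℝ) - k)) ^ 2 / 8 *
            ∑ i ∈ Finset.range k, (1 / ((m : ℝ) - 1 - i)) ^ 2
          = τ ^ 2 / 8 * (((m : ℝ) - k) ^ 2 *
            ∑ i ∈ Finset.range k, (1 / ((m : ℝ) - 1 - i)) ^ 2) := by ring
      rw [h1]
      calc τ ^ 2 / 8 * (((m : ℝ) - k) ^ 2 *
            ∑ i ∈ Finset.range k, (1 / ((m : ℝ) - 1 - i)) ^ 2)
          ≤ τ ^ 2 / 8 * ((k : ℝ) * ((m : ℝ) - k + 1) / m) :=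
            mul_le_mul_of_nonneg_left hB (by positivity)
        _ = τ ^ 2 * ((k : ℝ) * ((m : ℝ) - k + 1) / m) / 8 := by ring
    -- combine everything
    have hfinal : (((Finset.univ.powersetCard k : Finset (Finset (Fin m))).filter
          (fun s => lam ≤ (∑ i ∈ s, z i) / k - (∑ i, z i) / m)).card : ℝ)
          * Real.exp (τ * ((k : ℝ) * lam))
        ≤ (m.choose k : ℝ) * Real.exp (τ ^ 2 * ((k : ℝ) * ((m : ℝ) - k + 1) / m) / 8) := by
      refine le_trans hcher (le_trans hmgf ?_)
      exact mul_le_mul_of_nonneg_left hBexp hCpos.le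
    rw [hcardpc, div_le_iff₀ hCpos]
    have hAle : (((Finset.univ.powersetCard k : Finset (Finset (Fin m))).filter
          (fun s => lam ≤ (∑ i ∈ s, z i) / k - (∑ i, z i) / m)).card : ℝ)
        ≤ (m.choose k : ℝ) * Real.exp (τ ^ 2 * ((k : ℝ) * ((m : ℝ) - k + 1) / m) / 8
            - τ * ((k : ℝ) * lam)) := by
      rw [Real.exp_sub, ← mul_div_assoc, le_div_iff₀ (Real.exp_pos _)]
      exact hfinal
    have hexpo : τ ^ 2 * ((k : ℝ) * ((m : ℝ) - k + 1) / m) / 8 - τ * ((k : ℝ) * lam)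
        = -(2 * m * k * lam ^ 2) / ((m : ℝ) - (k : ℝ) + 1) := by
      rw [hτdef]
      field_simp
      ring
    rw [hexpo] at hAle
    calc (((Finset.univ.powersetCard k : Finset (Finset (Fin m))).filter
          (fun s => lam ≤ (∑ i ∈ s, z i) / k - (∑ i, z i) / m)).card : ℝ)
        ≤ (m.choose k : ℝ) * Real.exp (-(2 * m * k * lam ^ 2) / ((m : ℝ) - (k : ℝ) + 1)) :=
          hAle
      _ = Real.exp (-(2 * m * k * lam ^ 2) / ((m : ℝ) - (k : ℝ) + 1)) * (m.choose k : ℝ) := by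
          ring
end
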